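/- arXiv:2602.16275 — 3 statements merged into one kernel-verified Lean document; each statement's English description precedes it below -/
import Mathlib

section
/- For any real h with 0 ≤ h < 2, the inequality arccos(1 - h²/2) - h ≥ h³/24 holds. -/
open Real

lemma arcsin_lower (x : ℝ) (hx0 : 0 ≤ x) (hx1 : x < 1) :
    x + x ^ 3 / 6 ≤ Real.arcsin x := by
  set f : ℝ → ℝ := fun t => Real.arcsin t - (t + t ^ 3 / 6) with hf
  have hmono : MonotoneOn f (Set.Icc 0 1) := by
    apply monotoneOn_of_deriv_nonneg (convex_Icc 0 1)
    · exact (Real.continuous_arcsin.sub (by continuity)).continuousOn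
    · intro t ht
      rw [interior_Icc] at ht
      have h1 : t ≠ -1 := by nlinarith [ht.1]
      have h2 : t ≠ 1 := ne_of_lt ht.2
      exact ((Real.hasDerivAt_arcsin h1 h2).sub
        (((hasDerivAt_id t).add (((hasDerivAt_pow 3 t)).div_const 6)))).differentiableAt.differentiableWithinAt
    · intro t ht
      rw [interior_Icc] at ht
      have h1 : t ≠ -1 := by nlinarith [ht.1]
      have h2 : t ≠ 1 := ne_of_lt ht.2
      have hd : HasDerivAt f (1 / Real.sqrt (1 - t ^ 2) - (1 + 3 * t ^ 2 / 6)) t := by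
        have := (Real.hasDerivAt_arcsin h1 h2).sub
          (((hasDerivAt_id t).add (((hasDerivAt_pow 3 t)).div_const 6)))
        simp at this
        rw [one_div]
        exact this
      rw [hd.deriv]
      have hs : 0 < Real.sqrt (1 - t ^ 2) := by
        apply Real.sqrt_pos.2; nlinarith [ht.1, ht.2]
      have hsq : Real.sqrt (1 - t ^ 2) ^ 2 = 1 - t ^ 2 :=
        Real.sq_sqrt (by nlinarith [ht.1, ht.2])
      have key : (1 + 3 * t ^ 2 / 6) * Real.sqrt (1 - t ^ 2) ≤ 1 := by
        nlinarith [sq_nonneg ((1 + t ^ 2 / 2) * Real.sqrt (1 - t ^ 2) - 1), hs, hsq,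
          sq_nonneg t, sq_nonneg (t * t), mul_pos hs hs]
      rw [sub_nonneg, le_div_iff₀ hs]
      exact key
  have h0 : f 0 ≤ f x := hmono (by norm_num) ⟨hx0, le_of_lt hx1⟩ hx0
  simp only [hf, Real.arcsin_zero] at h0
  norm_num at h0
  linarith

/-- Per-step phase error of the first-order symplectic integrator for the
harmonic oscillator: for `0 ≤ h < 2`, `arccos (1 - h²/2) - h ≥ h³/24`. -/
theorem stmt_0 (h : ℝ) (h0 : 0 ≤ h) (h2 : h < 2) :
    Real.arccos (1 - h ^ 2 / 2) - h ≥ h ^ 3 / 24 := by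
  have hx0 : (0:ℝ) ≤ h / 2 := by linarith
  have hx1 : h / 2 < 1 := by linarith
  have hid : Real.arccos (1 - h ^ 2 / 2) = 2 * Real.arcsin (h / 2) := by
    have hs : Real.sin (Real.arcsin (h / 2)) = h / 2 :=
      Real.sin_arcsin (by linarith) (by linarith)
    have hcos : Real.cos (2 * Real.arcsin (h / 2)) = 1 - h ^ 2 / 2 := by
      rw [Real.cos_two_mul]
      have := Real.sin_sq_add_cos_sq (Real.arcsin (h / 2))
      nlinarith [hs]
    rw [← hcos, Real.arccos_cos]
    · have := Real.arcsin_nonneg.2 hx0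
      linarith
    · have := Real.arcsin_le_pi_div_two (h / 2)
      linarith
  rw [hid]
  have := arcsin_lower (h / 2) hx0 hx1
  nlinarith
end

section
/- Let a, b ≥ 0 and 0 < s < 1. Then a^s + b^s - (a+b)^s ≥ (2 - 2^s) · (min(a,b))^s. -/
lemma aux_key (s : ℝ) (hs0 : 0 < s) (hs1 : s < 1) (a b : ℝ) (ha : 0 ≤ a) (hab : a ≤ b) :
    a ^ s + b ^ s - (a + b) ^ s ≥ (2 - 2 ^ s) * a ^ s := by
  have hb : 0 ≤ b := ha.trans hab
  rcases eq_or_lt_of_le ha with h | ha'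
  · simp [← h, Real.zero_rpow hs0.ne']
  have hb' : 0 < b := lt_of_lt_of_le ha' hab
  have hconc := Real.concaveOn_rpow hs0.le hs1.le
  set f : ℝ → ℝ := fun x : ℝ => x ^ s with hf
  have ht : (0:ℝ) ≤ a / b := by positivity
  have hu : (0:ℝ) ≤ (b - a) / b := by
    apply div_nonneg (by linarith) hb'.le
  have htu : (b - a) / b + a / b = 1 := by field_simp; ring
  have h1 : ((b - a) / b) * f a + (a / b) * f (a + b) ≤ f (2 * a) := by
    have := hconc.2 (Set.mem_Ici.2 ha) (Set.mem_Ici.2 (by linarith : (0:ℝ) ≤ a + b))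
      hu ht htu
    convert this using 2
    · rfl
    · rfl
    · rfl
    simp only [smul_eq_mul]
    field_simp
    ring
  have h2 : (a / b) * f a + ((b - a) / b) * f (a + b) ≤ f b := by
    have := hconc.2 (Set.mem_Ici.2 ha) (Set.mem_Ici.2 (by linarith : (0:ℝ) ≤ a + b))
      ht hu (by linarith)
    convert this using 2
    · rfl
    · rfl
    · rfl
    simp only [smul_eq_mul]
    field_simp
    ring
  have hsum : f a + f (a + b) ≤ f (2 * a) + f b := by
    have hadd := add_le_add h1 h2
    have e : (b - a) / b * f a + a / b * f (a + b) + (a / b * f a + (b - a) / b * f (a + b))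
        = f a + f (a + b) := by
      linear_combination (f a + f (a + b)) * htu
    linarith [hadd, e.ge, e.le]
  have h2a : f (2 * a) = 2 ^ s * a ^ s := by
    simp only [hf]
    rw [Real.mul_rpow (by norm_num) ha]
  simp only [hf] at hsum h2a ⊢
  nlinarith [hsum, h2a]

/-- For `a, b ≥ 0` and `0 < s < 1`,
`a^s + b^s - (a+b)^s ≥ (2 - 2^s) · (min a b)^s`. -/
theorem stmt_3 (a b s : ℝ) (ha : 0 ≤ a) (hb : 0 ≤ b) (hs0 : 0 < s) (hs1 : s < 1) :
    a ^ s + b ^ s - (a + b) ^ s ≥ (2 - 2 ^ s) * (min a b) ^ s := by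
  rcases le_total a b with h | h
  · rw [min_eq_left h]
    exact aux_key s hs0 hs1 a b ha h
  · rw [min_eq_right h]
    have := aux_key s hs0 hs1 b a hb h
    rw [add_comm b a] at this
    linarith
end

section
/- Let 0 < s < 1 and n ≥ 1. Suppose â, b̂ : ℤⁿ → ℝ satisfy |â(k)| ≤ exp(-|k|^s) and |b̂(k)| ≤ exp(-|k|^s) for all k (with |k| the ℓ¹ norm). Then there is a constant C = C(n,s) such that for all k ∈ ℤⁿ, |(â * b̂)(k)| ≤ C · exp(-|k|^s), where (â * b̂)(k) = ∑_{k'} â(k - k') b̂(k'). -/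
open Real

/-- Refined subadditivity of concave powers. -/
private lemma key_pow_ineq {s : ℝ} (hs0 : 0 < s) (hs1 : s < 1) {x y : ℝ}
    (hy : 0 ≤ y) (hxy : y ≤ x) :
    (x + y) ^ s ≤ x ^ s + ((2:ℝ) ^ s - 1) * y ^ s := by
  have hx : 0 ≤ x := hy.trans hxy
  rcases hx.eq_or_lt with h | hx'
  · have hy0 : y = 0 := le_antisymm (h ▸ hxy) hy
    subst hy0
    rw [← h]
    simp [Real.zero_rpow hs0.ne']
  · have hcc := Real.concaveOn_rpow hs0.le hs1.le
    set t := y / x with htdef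
    have ht0 : 0 ≤ t := div_nonneg hy hx
    have ht1 : t ≤ 1 := div_le_one_of_le₀ hxy hx
    have hmem1 : y ∈ Set.Ici (0:ℝ) := hy
    have hmem2 : x + y ∈ Set.Ici (0:ℝ) := by
      simp only [Set.mem_Ici]; linarith
    have h1 := hcc.2 hmem1 hmem2 ht0 (by linarith : (0:ℝ) ≤ 1 - t) (by ring)
    have h2 := hcc.2 hmem1 hmem2 (by linarith : (0:ℝ) ≤ 1 - t) ht0 (by ring)
    simp only [smul_eq_mul] at h1 h2
    have htx : t * x = y := by rw [htdef]; exact div_mul_cancel₀ y hx'.ne'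
    have e1 : t * y + (1 - t) * (x + y) = x := by
      field_simp [htdef]
      linarith [htx]
    have e2 : (1 - t) * y + t * (x + y) = 2 * y := by
      field_simp [htdef]
      linarith [htx]
    rw [e1] at h1
    rw [e2] at h2
    have h3 : (2 * y) ^ s = 2 ^ s * y ^ s := Real.mul_rpow (by norm_num) hy
    rw [h3] at h2
    linarith

private lemma summable_exp_neg_rpow_nat {c s : ℝ} (hc : 0 < c) (hs : 0 < s) :
    Summable fun m : ℕ => Real.exp (-(c * (m:ℝ) ^ s)) := by
  obtain ⟨K, hK⟩ : ∃ K : ℕ, 2 ≤ s * K := by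
    refine ⟨⌈2/s⌉₊, ?_⟩
    have h := Nat.le_ceil (2/s)
    calc (2:ℝ) = s * (2/s) := by field_simp
    _ ≤ s * ⌈2/s⌉₊ := by nlinarith
  have hK0 : 0 < (K:ℝ) := by
    rcases Nat.eq_zero_or_pos K with rfl | h
    · simp at hK; linarith
    · exact_mod_cast h
  rw [← summable_nat_add_iff 1]
  have hsum : Summable fun j : ℕ => ((c/K)^K)⁻¹ * (((j:ℝ)+1) ^ (2:ℝ))⁻¹ := by
    have h0 : Summable fun j : ℕ => (((j:ℝ)) ^ (2:ℝ))⁻¹ :=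
      Real.summable_nat_rpow_inv.mpr (by norm_num)
    have h1 := (summable_nat_add_iff 1).mpr h0
    exact (h1.congr (by intro j; push_cast; ring_nf)).mul_left _
  apply Summable.of_nonneg_of_le (fun j => (Real.exp_pos _).le) _ hsum
  intro j
  set m : ℝ := (j:ℝ) + 1 with hm
  have hm1 : (1:ℝ) ≤ m := by
    have : (0:ℝ) ≤ (j:ℝ) := Nat.cast_nonneg j
    linarith
  have hm0 : (0:ℝ) ≤ m := by linarith
  have step1 : (c * m ^ s / K) ^ K ≤ Real.exp (c * m ^ s) := by
    have hz : 0 ≤ c * m ^ s / K := by positivity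
    calc (c * m ^ s / K) ^ K ≤ (Real.exp (c * m ^ s / K)) ^ K := by
          apply pow_le_pow_left₀ hz
          linarith [Real.add_one_le_exp (c * m ^ s / K)]
    _ = Real.exp (c * m ^ s) := by
          rw [← Real.exp_nat_mul]
          congr 1
          field_simp
  have e3 : (c * m ^ s / K) ^ K = (c/K)^K * (m ^ s) ^ K := by
    rw [← mul_pow]; congr 1; ring
  have e4 : (m ^ s) ^ K = m ^ (s * K) := by
    rw [← Real.rpow_natCast (m ^ s) K, ← Real.rpow_mul hm0]
  have h5 : m ^ (2:ℝ) ≤ m ^ (s * (K:ℝ)) := Real.rpow_le_rpow_of_exponent_le hm1 hK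
  have step2 : (c/K)^K * m ^ (2:ℝ) ≤ Real.exp (c * m ^ s) := by
    calc (c/K)^K * m ^ (2:ℝ) ≤ (c/K)^K * m ^ (s * (K:ℝ)) := by
          apply mul_le_mul_of_nonneg_left h5 (by positivity)
    _ = (c * m ^ s / K) ^ K := by rw [e3, e4]
    _ ≤ Real.exp (c * m ^ s) := step1
  have hpos : (0:ℝ) < (c/K)^K * m ^ (2:ℝ) := by positivity
  have hfin : (Real.exp (c * m ^ s))⁻¹ ≤ ((c/K)^K)⁻¹ * (m ^ (2:ℝ))⁻¹ := by
    rw [← mul_inv]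
    exact inv_anti₀ hpos step2
  have : ((j+1:ℕ):ℝ) = m := by push_cast; rfl
  rw [this, Real.exp_neg]
  exact hfin

private lemma summable_exp_neg_rpow_int {c s : ℝ} (hc : 0 < c) (hs : 0 < s) :
    Summable fun m : ℤ => Real.exp (-(c * |(m:ℝ)| ^ s)) := by
  apply Summable.of_nat_of_neg <;>
    · apply (summable_exp_neg_rpow_nat hc hs).congr
      intro j
      congr 3
      push_cast
      simp [abs_of_nonneg]

private lemma summable_pi_prod {n : ℕ} (h : ℤ → ℝ) (hnn : ∀ m, 0 ≤ h m)
    (hs : Summable h) : Summable fun k : Fin n → ℤ => ∏ i, h (k i) := by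
  induction n with
  | zero => exact Summable.of_finite
  | succ n ih =>
    have hG : Summable (fun x : ℤ × (Fin n → ℤ) => h x.1 * ∏ i, h (x.2 i)) :=
      Summable.mul_of_nonneg (f := h) (g := fun k : Fin n → ℤ => ∏ i, h (k i))
        hs ih (fun m => hnn m) (fun k => Finset.prod_nonneg fun i _ => hnn _)
    have h2 := ((Fin.consEquiv fun _ => ℤ).symm.summable_iff
        (f := fun x : ℤ × (Fin n → ℤ) => h x.1 * ∏ i, h (x.2 i))).mpr hG
    apply h2.congr
    intro k
    simp [Fin.prod_univ_succ, Fin.tail, Fin.consEquiv]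

/-- Two-point inequality with ordered arguments. -/
private lemma exp_two_point {s : ℝ} (hs0 : 0 < s) (hs1 : s < 1) {u v w : ℝ}
    (hv : 0 ≤ v) (hw : 0 ≤ w) (hvu : v ≤ u) (hwuv : w ≤ u + v) :
    Real.exp (-(u^s)) * Real.exp (-(v^s)) ≤
      Real.exp (-(w^s)) * Real.exp (-((2 - 2^s) * v^s)) := by
  rw [← Real.exp_add, ← Real.exp_add]
  apply Real.exp_le_exp.mpr
  have h1 : w^s ≤ (u+v)^s := Real.rpow_le_rpow hw hwuv hs0.le
  have h2 : (u+v)^s ≤ u^s + ((2:ℝ)^s - 1)*v^s := key_pow_ineq hs0 hs1 hv hvu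
  linarith

private lemma exp_two_point' {s : ℝ} (hs0 : 0 < s) (hs1 : s < 1) {u v w : ℝ}
    (hu : 0 ≤ u) (hv : 0 ≤ v) (hw : 0 ≤ w) (hwuv : w ≤ u + v) :
    Real.exp (-(u^s)) * Real.exp (-(v^s)) ≤
      Real.exp (-(w^s)) *
        (Real.exp (-((2 - 2^s) * u^s)) + Real.exp (-((2 - 2^s) * v^s))) := by
  rcases le_total v u with hvu | huv
  · calc Real.exp (-(u^s)) * Real.exp (-(v^s))
        ≤ Real.exp (-(w^s)) * Real.exp (-((2 - 2^s) * v^s)) :=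
          exp_two_point hs0 hs1 hv hw hvu hwuv
    _ ≤ _ := by
          apply mul_le_mul_of_nonneg_left _ (Real.exp_pos _).le
          linarith [Real.exp_pos (-((2 - 2^s) * u^s))]
  · calc Real.exp (-(u^s)) * Real.exp (-(v^s))
        = Real.exp (-(v^s)) * Real.exp (-(u^s)) := by ring
    _ ≤ Real.exp (-(w^s)) * Real.exp (-((2 - 2^s) * u^s)) :=
          exp_two_point hs0 hs1 hu hw huv (by linarith)
    _ ≤ _ := by
          apply mul_le_mul_of_nonneg_left _ (Real.exp_pos _).le
          linarith [Real.exp_pos (-((2 - 2^s) * v^s))]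

/-- Gevrey decay is preserved under lattice convolution: if
`|â(k)|, |b̂(k)| ≤ exp(-|k|₁^s)` on `ℤⁿ`, then there is `C = C(n,s)` with
`|(â * b̂)(k)| ≤ C · exp(-|k|₁^s)` for all `k`. -/
theorem stmt_8 (n : ℕ) (hn : 1 ≤ n) (s : ℝ) (hs0 : 0 < s) (hs1 : s < 1)
    (a b : (Fin n → ℤ) → ℝ)
    (ha : ∀ k, |a k| ≤ Real.exp (-(∑ i, |(k i : ℝ)|) ^ s))
    (hb : ∀ k, |b k| ≤ Real.exp (-(∑ i, |(k i : ℝ)|) ^ s)) :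
    ∃ C : ℝ, ∀ k : Fin n → ℤ,
      |∑' k' : Fin n → ℤ, a (k - k') * b k'| ≤
        C * Real.exp (-(∑ i, |(k i : ℝ)|) ^ s) := by
  set c : ℝ := 2 - 2^s with hcdef
  have hc : 0 < c := by
    have h2 : (2:ℝ)^s < 2^(1:ℝ) := Real.rpow_lt_rpow_of_exponent_lt one_lt_two hs1
    rw [Real.rpow_one] at h2
    simp only [hcdef]
    linarith
  set N : (Fin n → ℤ) → ℝ := fun k => ∑ i, |(k i : ℝ)| with hNdef
  have hN0 : ∀ k, 0 ≤ N k := fun k => Finset.sum_nonneg fun i _ => abs_nonneg _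
  have htri : ∀ k k' : Fin n → ℤ, N k ≤ N (k - k') + N k' := by
    intro k k'
    rw [← Finset.sum_add_distrib]
    apply Finset.sum_le_sum
    intro i _
    have : ((k - k') i : ℝ) = (k i : ℝ) - (k' i : ℝ) := by
      simp [Pi.sub_apply]
    rw [this]
    calc |(k i : ℝ)| = |((k i : ℝ) - (k' i : ℝ)) + (k' i : ℝ)| := by ring_nf
    _ ≤ |(k i : ℝ) - (k' i : ℝ)| + |(k' i : ℝ)| := abs_add_le _ _
  set Sfun : (Fin n → ℤ) → ℝ := fun k => Real.exp (-(c * (N k)^s)) with hSfundef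
  have hn' : (0:ℝ) < n := by exact_mod_cast hn
  have hc' : 0 < c / n := div_pos hc hn'
  have hSsum : Summable Sfun := by
    have hprod : Summable (fun k : Fin n → ℤ =>
        ∏ i, Real.exp (-(c/n * |(k i:ℝ)|^s))) := by
      apply summable_pi_prod (fun m => Real.exp (-(c/n * |(m:ℝ)|^s)))
        (fun m => (Real.exp_pos _).le)
      exact summable_exp_neg_rpow_int hc' hs0
    apply Summable.of_nonneg_of_le (fun k => (Real.exp_pos _).le) _ hprod
    intro k
    rw [← Real.exp_sum]
    apply Real.exp_le_exp.mpr
    have key : ∑ i, |(k i:ℝ)|^s ≤ n * (N k)^s := by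
      calc ∑ i, |(k i:ℝ)|^s ≤ ∑ _i : Fin n, (N k)^s := by
            apply Finset.sum_le_sum
            intro i _
            exact Real.rpow_le_rpow (abs_nonneg _)
              (Finset.single_le_sum (fun j _ => abs_nonneg ((k j : ℝ)))
                (Finset.mem_univ i)) hs0.le
      _ = n * (N k)^s := by
            simp [Finset.sum_const, nsmul_eq_mul]
    have e5 : ∑ i, -(c/n * |(k i:ℝ)|^s) = -(c/n * ∑ i, |(k i:ℝ)|^s) := by
      rw [Finset.sum_neg_distrib, Finset.mul_sum]
    rw [e5]
    have : c/n * ∑ i, |(k i:ℝ)|^s ≤ c * (N k)^s := by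
      calc c/n * ∑ i, |(k i:ℝ)|^s ≤ c/n * (n * (N k)^s) :=
            mul_le_mul_of_nonneg_left key hc'.le
      _ = c * (N k)^s := by field_simp
    linarith
  set S : ℝ := ∑' k, Sfun k with hSdef
  refine ⟨2 * S, fun k => ?_⟩
  -- HasSum for the majorant
  have h1 : HasSum (fun k' => Sfun (k - k')) S := by
    have := ((Equiv.subLeft k).hasSum_iff (f := Sfun)).mpr hSsum.hasSum
    apply this.congr_fun
    intro k'
    simp [Equiv.subLeft, Function.comp]
  have hg : HasSum (fun k' : Fin n → ℤ =>
      Real.exp (-(N k)^s) * (Sfun (k - k') + Sfun k'))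
      (Real.exp (-(N k)^s) * (S + S)) :=
    (h1.add hSsum.hasSum).mul_left _
  have hbound : ∀ k' : Fin n → ℤ, ‖a (k - k') * b k'‖ ≤
      Real.exp (-(N k)^s) * (Sfun (k - k') + Sfun k') := by
    intro k'
    rw [Real.norm_eq_abs, abs_mul]
    calc |a (k - k')| * |b k'|
        ≤ Real.exp (-(N (k - k'))^s) * Real.exp (-(N k')^s) := by
          apply mul_le_mul (ha _) (hb _) (abs_nonneg _) (Real.exp_pos _).le
    _ ≤ Real.exp (-(N k)^s) *
          (Real.exp (-(c * (N (k - k'))^s)) + Real.exp (-(c * (N k')^s))) := by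
          have := exp_two_point' hs0 hs1 (hN0 (k - k')) (hN0 k') (hN0 k) (htri k k')
          simpa [hcdef] using this
    _ = Real.exp (-(N k)^s) * (Sfun (k - k') + Sfun k') := rfl
  have hfin := tsum_of_norm_bounded hg hbound
  rw [Real.norm_eq_abs] at hfin
  calc |∑' k' : Fin n → ℤ, a (k - k') * b k'| ≤ Real.exp (-(N k)^s) * (S + S) := hfin
  _ = 2 * S * Real.exp (-(N k)^s) := by ring
end
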